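/- arXiv:1601.02771 — 2 statements merged into one kernel-verified Lean document; each statement's English description precedes it below -/
import Mathlib

section
/- Every infinite sequence that can be generated by a morphism with exponential growth has Diophantine exponent strictly greater than 1. That is, if a = φ(σ^ω(a₀)) where σ is a morphism on a finite alphabet A prolongable on a₀, all letters of A occur in σ^ω(a₀), the spectral radius of the incidence matrix M_σ is > 1, and φ is a coding, then dio(a) > 1. -/
/-- `w` is a prefix of the infinite word `a`. -/
def IsPrefOf {A : Type*} (w : List A) (a : ℕ → A) : Prop :=
  ∀ i : Fin w.length, w.get i = a i

/-- Fractional power `V^α`: `V^⌊α⌋` followed by the prefix of `V`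
of length `⌈{α}·|V|⌉`. -/
noncomputable def fracPow {A : Type*} (V : List A) (α : ℝ) : List A :=
  (List.replicate ⌊α⌋₊ V).flatten ++ V.take ⌈Int.fract α * V.length⌉₊

/-- The set of admissible exponents in the definition of the Diophantine exponent. -/
def dioSet {A : Type*} (a : ℕ → A) : Set ℝ :=
  {ρ | ∀ N : ℕ, ∃ (U V : List A) (α : ℝ), V ≠ [] ∧ 1 ≤ α ∧
    IsPrefOf (U ++ fracPow V α) a ∧ N ≤ (U ++ fracPow V α).length ∧
    ρ ≤ ((U ++ fracPow V α).length : ℝ) / ((U.length : ℝ) + (V.length : ℝ))}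

/-- Diophantine exponent of an infinite word. -/
noncomputable def dio {A : Type*} (a : ℕ → A) : EReal :=
  sSup ((fun ρ : ℝ => (ρ : EReal)) '' dioSet a)

/-- Action of a morphism (given by its values on letters) on a finite word. -/
def mapW {A : Type*} (σ : A → List A) (w : List A) : List A := w.flatMap σ

/-- `n`-th iterate of a morphism applied to a word. -/
def iterW {A : Type*} (σ : A → List A) (n : ℕ) (w : List A) : List A :=
  (mapW σ)^[n] w

/-- `σ` is prolongable on the letter `a`. -/
def Prolongable {A : Type*} (σ : A → List A) (a : A) : Prop :=
  (∃ W : List A, W ≠ [] ∧ σ a = a :: W) ∧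
  Filter.Tendsto (fun n => (iterW σ n [a]).length) Filter.atTop Filter.atTop

/-- The letter `b` has maximal growth for `σ`. -/
def MaxGrowth {A : Type*} (σ : A → List A) (b : A) : Prop :=
  ∃ C : ℝ, ∀ c : A, ∀ n : ℕ, 1 ≤ n →
    ((iterW σ n [c]).length : ℝ) < C * ((iterW σ n [b]).length : ℝ)

/-- Incidence matrix of a morphism, viewed over `ℂ`. -/
noncomputable def incMat {A : Type*} [Fintype A] [DecidableEq A]
    (σ : A → List A) : Matrix A A ℂ :=
  fun i j => ((σ j).count i : ℂ)

/-- Spectral radius of the incidence matrix of a morphism. -/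
noncomputable def specRad {A : Type*} [Fintype A] [DecidableEq A]
    (σ : A → List A) : ℝ :=
  sSup ((fun μ : ℂ => ‖μ‖) '' spectrum ℂ (incMat σ))

/-! ### Auxiliary lemmas -/

section AuxBasic
variable {A B : Type*} (σ : A → List A) (u : ℕ → A)

theorem iterW_succ' (n : ℕ) (w : List A) :
    iterW σ (n+1) w = mapW σ (iterW σ n w) := Function.iterate_succ_apply' _ _ _

theorem iterW_append (n : ℕ) (w w' : List A) :
    iterW σ n (w ++ w') = iterW σ n w ++ iterW σ n w' := by
  induction n with
  | zero => rfl
  | succ n ih => simp [iterW_succ', ih, mapW]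

theorem iterW_add (m n : ℕ) (w : List A) :
    iterW σ (m + n) w = iterW σ m (iterW σ n w) := Function.iterate_add_apply _ _ _ _

theorem iterW_cons (n : ℕ) (c : A) (w : List A) :
    iterW σ n (c :: w) = iterW σ n [c] ++ iterW σ n w := by
  rw [← iterW_append]; rfl

theorem iterW_nil (n : ℕ) : iterW σ n ([] : List A) = [] := by
  induction n with
  | zero => rfl
  | succ n ih => rw [iterW, Function.iterate_succ_apply]; exact ih

theorem iterW_succ_singleton (n : ℕ) (j : A) :
    iterW σ (n + 1) [j] = iterW σ n (σ j) := by
  rw [iterW, Function.iterate_succ_apply]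
  congr 1
  simp [mapW]

theorem len_le_of_mem (n : ℕ) {c : A} {w : List A} (h : c ∈ w) :
    (iterW σ n [c]).length ≤ (iterW σ n w).length := by
  induction w with
  | nil => simp at h
  | cons d t ih =>
    have hd : (iterW σ n (d :: t)).length
        = (iterW σ n [d]).length + (iterW σ n t).length := by
      rw [iterW_cons, List.length_append]
    rcases List.mem_cons.1 h with h | h
    · subst h; omega
    · have := ih h; omega

theorem iterW_prefix_mono (n : ℕ) {w w' : List A} (h : w <+: w') :
    iterW σ n w <+: iterW σ n w' := by
  obtain ⟨t, rfl⟩ := h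
  exact ⟨iterW σ n t, (iterW_append σ n w t).symm⟩

theorem length_iterW_le (n : ℕ) (Mb : ℕ) (hMb : ∀ c : A, (iterW σ n [c]).length ≤ Mb) :
    ∀ w : List A, (iterW σ n w).length ≤ w.length * Mb := by
  intro w
  induction w with
  | nil => rw [iterW_nil]; simp
  | cons c t ih =>
    rw [iterW_cons, List.length_append, List.length_cons]
    have := hMb c
    calc (iterW σ n [c]).length + (iterW σ n t).length ≤ Mb + t.length * Mb := by omega
    _ = (t.length + 1) * Mb := by ring

/-- The prefix of length `m` of an infinite word. -/
def pref (m : ℕ) : List A := (List.range m).map u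

@[simp] theorem length_pref (m : ℕ) : (pref u m).length = m := by simp [pref]

theorem getElem_pref {m i : ℕ} (h : i < (pref u m).length) :
    (pref u m)[i] = u i := by simp [pref]

theorem pref_mono {m m' : ℕ} (h : m ≤ m') : pref u m <+: pref u m' := by
  have : List.range m <+: List.range m' := by
    apply List.prefix_iff_eq_take.2
    rw [List.take_range]
    simp [Nat.min_eq_left h]
  exact this.map u

theorem isPrefOf_pref (m : ℕ) : IsPrefOf (pref u m) u := by
  intro i
  simp [List.get_eq_getElem, getElem_pref]

theorem IsPrefOf.of_prefix {w w' : List A} (h : w <+: w') (h' : IsPrefOf w' u) :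
    IsPrefOf w u := by
  obtain ⟨t, rfl⟩ := h
  intro i
  have hi : (i : ℕ) < (w ++ t).length := by
    have := i.2; simp only [List.length_append]; omega
  have := h' ⟨i, hi⟩
  simp only [List.get_eq_getElem] at this ⊢
  rw [← this, List.getElem_append_left i.2]

theorem isPrefOf_eq_pref {w : List A} (h : IsPrefOf w u) : w = pref u w.length := by
  apply List.ext_getElem (by simp)
  intro i h1 h2
  rw [getElem_pref]
  exact h ⟨i, h1⟩

theorem IsPrefOf.prefix_of_le {w : List A} (h : IsPrefOf w u) {m : ℕ}
    (hm : w.length ≤ m) : w <+: pref u m := by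
  rw [isPrefOf_eq_pref u h]; exact pref_mono u hm

theorem pref_succ (m : ℕ) : pref u (m + 1) = pref u m ++ [u m] := by
  simp [pref, List.range_succ]

theorem length_iterW_pref_le (n : ℕ) (T Mb M'b : ℕ)
    (hMb : ∀ c : A, (iterW σ n [c]).length ≤ Mb)
    (hM'b : ∀ t : ℕ, T ≤ t → (iterW σ n [u t]).length ≤ M'b) :
    ∀ ℓ : ℕ, (iterW σ n (pref u ℓ)).length ≤ T * Mb + ℓ * M'b := by
  have key : ∀ ℓ : ℕ, (iterW σ n (pref u ℓ)).length ≤ min ℓ T * Mb + ℓ * M'b := by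
    intro ℓ
    induction ℓ with
    | zero =>
      have : pref u 0 = ([] : List A) := by simp [pref]
      rw [this, iterW_nil]
      simp
    | succ ℓ ih =>
      rw [pref_succ, iterW_append, List.length_append]
      by_cases hℓT : ℓ < T
      · have h1 : (iterW σ n [u ℓ]).length ≤ Mb := hMb _
        have h2 : min (ℓ+1) T = min ℓ T + 1 := by omega
        rw [h2]
        have h3 : (min ℓ T + 1) * Mb = min ℓ T * Mb + Mb := by ring
        have h4 : (ℓ + 1) * M'b = ℓ * M'b + M'b := by ring
        omega
      · have h1 : (iterW σ n [u ℓ]).length ≤ M'b := hM'b ℓ (by omega)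
        have h2 : min (ℓ+1) T = min ℓ T := by omega
        rw [h2]
        have h3 : (ℓ + 1) * M'b = ℓ * M'b + M'b := by ring
        have h4 : (min ℓ T + 1) * Mb = min ℓ T * Mb + Mb := by ring
        omega
  intro ℓ
  calc (iterW σ n (pref u ℓ)).length ≤ min ℓ T * Mb + ℓ * M'b := key ℓ
  _ ≤ T * Mb + ℓ * M'b := by
      have : min ℓ T ≤ T := min_le_right _ _
      exact Nat.add_le_add_right (Nat.mul_le_mul_right _ this) _

theorem isPrefOf_map (φ : A → B) {w : List A} (h : IsPrefOf w u) :
    IsPrefOf (w.map φ) (fun i => φ (u i)) := by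
  intro i
  have hi : (i : ℕ) < w.length := by
    have := i.2; simpa using this
  have := h ⟨i, hi⟩
  simp only [List.get_eq_getElem] at this ⊢
  rw [List.getElem_map]
  rw [this]

end AuxBasic

theorem fracPow_eq {A : Type*} (V : List A) (k : ℕ) (hk1 : 1 ≤ k)
    (hk2 : k ≤ V.length) :
    fracPow V (1 + (k : ℝ) / V.length) = V ++ V.take k := by
  have hV : 0 < V.length := lt_of_lt_of_le hk1 hk2
  have hVR : (0:ℝ) < V.length := by exact_mod_cast hV
  rcases eq_or_lt_of_le hk2 with h | h
  · have : (k : ℝ) / V.length = 1 := by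
      rw [h]; field_simp
    rw [this]
    norm_num [fracPow]
    rw [List.take_of_length_le (le_of_eq h.symm)]
    simp
  · have hlt : (k : ℝ) / V.length < 1 := by
      rw [div_lt_one hVR]; exact_mod_cast h
    have hnn : (0:ℝ) ≤ (k : ℝ) / V.length := by positivity
    have hfl : ⌊(1 + (k : ℝ) / V.length)⌋₊ = 1 := by
      rw [Nat.floor_eq_iff (by positivity)]
      push_cast
      constructor <;> nlinarith
    have hfr : Int.fract (1 + (k : ℝ) / V.length) = (k : ℝ) / V.length := by
      rw [add_comm, Int.fract_add_one, Int.fract_eq_self]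
      exact ⟨hnn, hlt⟩
    rw [fracPow, hfl, hfr]
    have : (k : ℝ) / V.length * V.length = k := by field_simp
    rw [this]
    simp

section AuxMatrix
variable {A : Type*} [Fintype A] [DecidableEq A] (σ : A → List A)

theorem count_iterW (n : ℕ) (i : A) (w : List A) :
    (iterW σ n w).count i
      = ∑ k : A, (w.count k) * ((iterW σ n [k]).count i) := by
  induction w with
  | nil =>
    rw [iterW_nil]
    simp
  | cons c t ih =>
    rw [iterW_cons, List.count_append, ih]
    have : ∀ k : A, ((c :: t).count k) * ((iterW σ n [k]).count i)
        = (if k = c then (iterW σ n [k]).count i else 0)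
          + (t.count k) * ((iterW σ n [k]).count i) := by
      intro k
      rw [List.count_cons]
      by_cases hk : k = c
      · simp [hk]; ring
      · simp [hk, Ne.symm hk]
    rw [Finset.sum_congr rfl (fun k _ => this k), Finset.sum_add_distrib,
      Finset.sum_ite_eq' Finset.univ c (fun k => (iterW σ n [k]).count i)]
    simp [Nat.add_comm]

theorem incMat_pow_apply (n : ℕ) (i j : A) :
    (incMat σ ^ n) i j = (((iterW σ n [j]).count i : ℕ) : ℂ) := by
  induction n generalizing i j with
  | zero =>
    by_cases hij : i = j <;>
      simp [iterW, Matrix.one_apply, hij, List.count_singleton] <;> exact Ne.symm hij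
  | succ n ih =>
    rw [pow_succ, Matrix.mul_apply]
    rw [iterW_succ_singleton, count_iterW]
    push_cast
    apply Finset.sum_congr rfl
    intro k _
    rw [ih, incMat]
    push_cast
    ring

/-- Maximal length of the image of a letter under the `n`-th iterate. -/
noncomputable def Mn (n : ℕ) : ℕ := Finset.univ.sup (fun c : A => (iterW σ n [c]).length)

theorem exists_growth [Nonempty A] (hθ : 1 < specRad σ) :
    ∃ θ : ℝ, 1 < θ ∧ ∀ n : ℕ, θ ^ n ≤ (Fintype.card A) * (Mn σ n : ℝ) := by
  classical
  set S := ((fun μ : ℂ => ‖μ‖) '' spectrum ℂ (incMat σ)) with hS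
  have hne : S.Nonempty := by
    by_contra h
    rw [Set.not_nonempty_iff_eq_empty] at h
    rw [specRad, ← hS, h, Real.sSup_empty] at hθ
    norm_num at hθ
  have hbdd : BddAbove S := by
    by_contra h
    rw [specRad, ← hS, Real.sSup_of_not_bddAbove h] at hθ
    norm_num at hθ
  obtain ⟨x, hxS, hx⟩ := exists_lt_of_lt_csSup hne hθ
  obtain ⟨μ, hμ, rfl⟩ := hxS
  have hdet : (Matrix.scalar A μ - incMat σ).det = 0 := by
    by_contra h
    exact (spectrum.mem_iff.1 hμ)
      ((Matrix.isUnit_iff_isUnit_det _).2 (Ne.isUnit h))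
  obtain ⟨v, hv0, hv⟩ := (Matrix.exists_mulVec_eq_zero_iff.2 hdet)
  have heig : (incMat σ).mulVec v = μ • v := by
    have := hv
    rw [Matrix.sub_mulVec] at this
    have h1 : (Matrix.scalar A μ).mulVec v = μ • v := by
      funext i
      simp [Matrix.scalar, Matrix.mulVec_diagonal]
    rw [h1] at this
    exact (sub_eq_zero.mp this).symm
  have heign : ∀ n : ℕ, (incMat σ ^ n).mulVec v = (μ ^ n) • v := by
    intro n
    induction n with
    | zero => simp [Matrix.one_mulVec]
    | succ n ih =>
      rw [pow_succ, ← Matrix.mulVec_mulVec, heig, Matrix.mulVec_smul, ih,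
        smul_smul, pow_succ, mul_comm]
  obtain ⟨i₀, -, hi₀⟩ := Finset.exists_max_image (Finset.univ : Finset A)
    (fun i => ‖v i‖) ⟨Classical.arbitrary A, Finset.mem_univ _⟩
  have hvi₀ : 0 < ‖v i₀‖ := by
    rcases Function.ne_iff.1 hv0 with ⟨j, hj⟩
    calc 0 < ‖v j‖ := norm_pos_iff.mpr hj
    _ ≤ ‖v i₀‖ := hi₀ j (Finset.mem_univ _)
  refine ⟨‖μ‖, hx, fun n => ?_⟩
  have key : ‖μ‖ ^ n * ‖v i₀‖ ≤ (Fintype.card A) * (Mn σ n : ℝ) * ‖v i₀‖ := by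
    have h1 : ‖μ‖ ^ n * ‖v i₀‖ = ‖((incMat σ ^ n).mulVec v) i₀‖ := by
      rw [heign n]
      simp [norm_smul]
    rw [h1, Matrix.mulVec, dotProduct]
    calc ‖∑ j, (incMat σ ^ n) i₀ j * v j‖
        ≤ ∑ j, ‖(incMat σ ^ n) i₀ j * v j‖ := norm_sum_le _ _
      _ ≤ ∑ j : A, (Mn σ n : ℝ) * ‖v i₀‖ := by
          apply Finset.sum_le_sum
          intro j _
          rw [norm_mul, incMat_pow_apply]
          have hc : ‖(((iterW σ n [j]).count i₀ : ℕ) : ℂ)‖ ≤ (Mn σ n : ℝ) := by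
            rw [Complex.norm_natCast]
            have h3 : (iterW σ n [j]).length ≤ Mn σ n :=
              Finset.le_sup (f := fun c : A => (iterW σ n [c]).length)
                (Finset.mem_univ j)
            have h2 : (iterW σ n [j]).count i₀ ≤ Mn σ n :=
              le_trans List.count_le_length h3
            exact_mod_cast h2
          exact mul_le_mul hc (hi₀ j (Finset.mem_univ _)) (norm_nonneg _)
            (Nat.cast_nonneg _)
      _ = (Fintype.card A) * (Mn σ n : ℝ) * ‖v i₀‖ := by
          rw [Finset.sum_const, Finset.card_univ]
          push_cast; ring
  exact le_of_mul_le_mul_right key hvi₀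

end AuxMatrix

set_option maxHeartbeats 1000000 in
/-- a sequence generated by a morphism with exponential growth
(i.e. a coding of a fixed point of a morphism whose incidence matrix has
spectral radius `> 1`) has Diophantine exponent strictly greater than 1. -/
theorem stmt_5 {A B : Type*} [Fintype A] [DecidableEq A] (σ : A → List A) (a₀ : A)
    (hpro : Prolongable σ a₀)
    (u : ℕ → A) (hu : ∀ n : ℕ, IsPrefOf (iterW σ n [a₀]) u)
    (hall : ∀ c : A, ∃ i : ℕ, u i = c)
    (hθ : 1 < specRad σ)
    (φ : A → B) :
    (1 : EReal) < dio (fun i => φ (u i)) := by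
  classical
  have : Nonempty A := ⟨a₀⟩
  obtain ⟨-, htend⟩ := hpro
  set ℓ : ℕ → ℕ := fun m => (iterW σ m [a₀]).length with hℓdef
  have hpref_eq : ∀ m, iterW σ m [a₀] = pref u (ℓ m) := fun m =>
    isPrefOf_eq_pref u (hu m)
  -- the fixed-point property
  have hfix : ∀ (m : ℕ) (w : List A), IsPrefOf w u → IsPrefOf (iterW σ m w) u := by
    intro m w hw
    obtain ⟨m', hm'⟩ := (htend.eventually_ge_atTop w.length).exists
    have h1 : w <+: iterW σ m' [a₀] := by
      rw [hpref_eq m']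
      exact IsPrefOf.prefix_of_le u hw hm'
    have h2 := iterW_prefix_mono σ m h1
    rw [← iterW_add] at h2
    exact IsPrefOf.of_prefix u h2 (hu (m + m'))
  -- letters occurring infinitely often
  set A' : Set A := {c | {i : ℕ | u i = c}.Infinite} with hA'def
  have hfinS : {i : ℕ | u i ∉ A'}.Finite := by
    have hsub : {i : ℕ | u i ∉ A'} ⊆
        ⋃ c ∈ {c : A | c ∉ A'}, {i : ℕ | u i = c} := by
      intro i hi
      exact Set.mem_biUnion hi rfl
    apply Set.Finite.subset _ hsub
    apply Set.Finite.biUnion (Set.toFinite _)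
    intro c hc
    exact Set.not_infinite.1 hc
  obtain ⟨T₀, hT₀⟩ := hfinS.bddAbove
  set T : ℕ := T₀ + 1 with hTdef
  have hT1 : 1 ≤ T := by omega
  have hTmem : ∀ i : ℕ, T ≤ i → u i ∈ A' := by
    intro i hi
    by_contra h
    have := hT₀ h
    omega
  -- the finset of letters occurring infinitely often
  set A'fs : Finset A := Finset.univ.filter (· ∈ A') with hA'fs
  have hA'ne : A'fs.Nonempty := ⟨u T, by
    rw [hA'fs, Finset.mem_filter]
    exact ⟨Finset.mem_univ _, hTmem T le_rfl⟩⟩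
  -- maximal growth over A'
  set M' : ℕ → ℕ := fun n => A'fs.sup (fun c : A => (iterW σ n [c]).length) with hM'def
  have hM'le : ∀ n, ∀ t : ℕ, T ≤ t → (iterW σ n [u t]).length ≤ M' n := by
    intro n t ht
    apply Finset.le_sup (f := fun c : A => (iterW σ n [c]).length)
    rw [hA'fs, Finset.mem_filter]
    exact ⟨Finset.mem_univ _, hTmem t ht⟩
  have hMn_le : ∀ n, ∀ c : A, (iterW σ n [c]).length ≤ Mn σ n := fun n c =>
    Finset.le_sup (f := fun c : A => (iterW σ n [c]).length) (Finset.mem_univ c)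
  -- m₀ : all letters occur in `pref u (ℓ m₀)`
  set g : A → ℕ := fun c => Classical.choose (hall c) with hgdef
  have hg : ∀ c, u (g c) = c := fun c => Classical.choose_spec (hall c)
  set I : ℕ := Finset.univ.sup g with hIdef
  obtain ⟨m₀, hm₀⟩ := (htend.eventually_ge_atTop (I + 1)).exists
  have hmem₀ : ∀ c : A, c ∈ pref u (ℓ m₀) := by
    intro c
    have hgc : g c < ℓ m₀ := by
      have : g c ≤ I := Finset.le_sup (Finset.mem_univ c)
      omega
    rw [pref]
    refine List.mem_map.2 ⟨g c, List.mem_range.2 hgc, hg c⟩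
  -- Mn is bounded by a later value of ℓ
  have hMnℓ : ∀ j, Mn σ j ≤ ℓ (j + m₀) := by
    intro j
    apply Finset.sup_le
    intro c _
    have h1 := len_le_of_mem σ j (hmem₀ c)
    rw [← hpref_eq m₀, ← iterW_add] at h1
    exact h1
  -- the key inequality (∗)
  have hstar : ∀ j m : ℕ, ℓ (j + m) ≤ T * Mn σ j + ℓ m * M' j := by
    intro j m
    have h1 : ℓ (j + m) = (iterW σ j (pref u (ℓ m))).length := by
      rw [← hpref_eq m, ← iterW_add]
    rw [h1]
    exact length_iterW_pref_le σ u j T (Mn σ j) (M' j) (hMn_le j) (hM'le j) (ℓ m)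
  -- exponential growth
  obtain ⟨θ, hθ1, hθn⟩ := exists_growth σ hθ
  set C₀ : ℕ := Fintype.card A with hC₀
  have hC₀1 : 1 ≤ C₀ := Fintype.card_pos
  -- choose s with θ^s > 2T
  obtain ⟨s, hs⟩ := pow_unbounded_of_one_lt ((2 * T : ℕ) : ℝ) hθ1
  -- infinitely many good n
  have hgood : ∀ n₂ : ℕ, ∃ n : ℕ, n₂ ≤ n ∧ 2 * T * Mn σ n < Mn σ (n + s) := by
    intro n₂
    by_contra hcon
    push_neg at hcon
    have hiter : ∀ k : ℕ, Mn σ (n₂ + k * s) ≤ (2 * T) ^ k * Mn σ n₂ := by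
      intro k
      induction k with
      | zero => simp
      | succ k ih =>
        have h1 : n₂ ≤ n₂ + k * s := by omega
        have h2 := hcon (n₂ + k * s) h1
        have h3 : n₂ + (k+1) * s = (n₂ + k * s) + s := by ring
        rw [h3]
        calc Mn σ ((n₂ + k * s) + s) ≤ 2 * T * Mn σ (n₂ + k * s) := h2
        _ ≤ 2 * T * ((2 * T) ^ k * Mn σ n₂) := Nat.mul_le_mul_left _ ih
        _ = (2 * T) ^ (k+1) * Mn σ n₂ := by ring
    -- contradiction in ℝ
    have h2T : (0:ℝ) < ((2 * T : ℕ) : ℝ) := by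
      have : 0 < 2 * T := by omega
      exact_mod_cast this
    have hq : 1 < θ ^ s / ((2 * T : ℕ) : ℝ) := by
      rw [lt_div_iff₀ h2T]
      simpa using hs
    obtain ⟨k, hk⟩ := pow_unbounded_of_one_lt
      ((C₀ : ℝ) * (Mn σ n₂ : ℝ) / θ ^ n₂) hq
    have hineq : θ ^ (n₂ + k * s) ≤ (C₀ : ℝ) * ((2 * T : ℕ) : ℝ) ^ k * (Mn σ n₂ : ℝ) := by
      calc θ ^ (n₂ + k * s) ≤ (C₀ : ℝ) * (Mn σ (n₂ + k * s) : ℝ) := hθn _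
      _ ≤ (C₀ : ℝ) * (((2 * T) ^ k * Mn σ n₂ : ℕ) : ℝ) := by
          have := hiter k
          have h4 : ((Mn σ (n₂ + k * s) : ℕ) : ℝ) ≤ (((2 * T) ^ k * Mn σ n₂ : ℕ) : ℝ) := by
            exact_mod_cast this
          have : (0:ℝ) ≤ (C₀ : ℝ) := Nat.cast_nonneg _
          nlinarith
      _ = (C₀ : ℝ) * ((2 * T : ℕ) : ℝ) ^ k * (Mn σ n₂ : ℝ) := by
          push_cast; ring
    have hθpos : (0:ℝ) < θ ^ n₂ := by positivity
    have hexp : θ ^ (n₂ + k * s) = θ ^ n₂ * (θ ^ s) ^ k := by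
      rw [pow_add, ← pow_mul, Nat.mul_comm k s]
    rw [hexp] at hineq
    have hfin : (θ ^ s / ((2 * T : ℕ) : ℝ)) ^ k ≤ (C₀ : ℝ) * (Mn σ n₂ : ℝ) / θ ^ n₂ := by
      rw [div_pow, div_le_div_iff₀ (by positivity) hθpos]
      calc (θ ^ s) ^ k * θ ^ n₂ = θ ^ n₂ * (θ ^ s) ^ k := by ring
      _ ≤ (C₀ : ℝ) * ((2 * T : ℕ) : ℝ) ^ k * (Mn σ n₂ : ℝ) := hineq
      _ = (C₀ : ℝ) * (Mn σ n₂ : ℝ) * ((2 * T : ℕ) : ℝ) ^ k := by ring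
    exact absurd hfin (not_le.2 hk)
  -- constants
  set L : ℕ := ℓ (s + m₀) with hLdef
  -- helper: on good n, Mn σ n ≤ L * M' n and Mn σ n ≥ 1 (for n with θ^n ≥ 1)
  have hgood2 : ∀ n : ℕ, 2 * T * Mn σ n < Mn σ (n + s) → Mn σ n < L * M' n := by
    intro n hn
    have h1 : Mn σ (n + s) ≤ ℓ (n + s + m₀) := by
      have := hMnℓ (n + s)
      simpa using this
    have h2 : ℓ (n + (s + m₀)) ≤ T * Mn σ n + L * M' n := hstar n (s + m₀)
    have h3 : n + s + m₀ = n + (s + m₀) := by omega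
    rw [h3] at h1
    have h5 : 2 * T * Mn σ n = T * Mn σ n + T * Mn σ n := by ring
    have hTM : T * Mn σ n < L * M' n := by omega
    calc Mn σ n ≤ T * Mn σ n := Nat.le_mul_of_pos_left _ (by omega)
    _ < L * M' n := hTM
  -- second occurrence data for letters occurring infinitely often
  have hocc : ∀ c ∈ A', ∃ p : ℕ × ℕ, p.1 < p.2 ∧ u p.1 = c ∧ u p.2 = c := by
    intro c hc
    obtain ⟨i₁, hi₁⟩ := (hc : {i : ℕ | u i = c}.Infinite).nonempty
    obtain ⟨j₁, hj₁, hij⟩ := (hc : {i : ℕ | u i = c}.Infinite).exists_gt i₁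
    exact ⟨(i₁, j₁), hij, hi₁, hj₁⟩
  set P : A → Prop := fun c => ∃ p : ℕ × ℕ, p.1 < p.2 ∧ u p.1 = c ∧ u p.2 = c with hPdef
  set J : ℕ := Finset.univ.sup (fun c : A => if h : P c then (Classical.choose h).2 else 0)
    with hJdef
  -- the candidate exponent
  set ρ : ℝ := 1 + 1 / ((J : ℝ) * (L : ℝ) + 1) with hρdef
  have hρ1 : 1 < ρ := by
    rw [hρdef]
    have : (0:ℝ) < (J : ℝ) * (L : ℝ) + 1 := by positivity
    have := one_div_pos.2 this
    linarith
  -- main claim: ρ ∈ dioSet (φ ∘ u)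
  have hmem : ρ ∈ dioSet (fun i => φ (u i)) := by
    intro N
    -- choose a good n with θ^n large
    obtain ⟨n₂, hn₂⟩ := pow_unbounded_of_one_lt
      ((C₀ : ℝ) * (L : ℝ) * (N + 1 : ℝ)) hθ1
    obtain ⟨n, hn₂n, hn⟩ := hgood n₂
    have hMnL : Mn σ n < L * M' n := hgood2 n hn
    -- θ^n bound gives M' n ≥ N+1 roughly
    have hθup : ((C₀ : ℝ) * (L : ℝ) * (N + 1 : ℝ)) < θ ^ n := by
      calc ((C₀ : ℝ) * (L : ℝ) * (N + 1 : ℝ)) < θ ^ n₂ := hn₂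
      _ ≤ θ ^ n := pow_le_pow_right₀ (le_of_lt hθ1) hn₂n
    have hMnlow : ((C₀ : ℝ) * (L : ℝ) * (N + 1 : ℝ)) < (C₀ : ℝ) * (Mn σ n : ℝ) := by
      calc ((C₀ : ℝ) * (L : ℝ) * (N + 1 : ℝ)) < θ ^ n := hθup
      _ ≤ (C₀ : ℝ) * (Mn σ n : ℝ) := hθn n
    have hC₀R : (0:ℝ) < (C₀ : ℝ) := by exact_mod_cast hC₀1
    have hLN : (L : ℝ) * (N + 1 : ℝ) < (Mn σ n : ℝ) := by
      nlinarith
    have hLMn : (L : ℕ) * (N + 1) ≤ Mn σ n := by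
      have : ((L * (N + 1) : ℕ) : ℝ) < (Mn σ n : ℝ) := by push_cast; nlinarith
      have := lt_of_lt_of_le this (le_refl _)
      exact_mod_cast le_of_lt this
    -- conclude M' n ≥ N + 1, in particular L ≥ 1 or handle L = 0
    have hL1 : 1 ≤ L := by
      by_contra hL
      have hL0 : L = 0 := by omega
      rw [hL0] at hMnL
      omega
    have hM'N : N + 1 ≤ M' n := by
      have h1 : L * (N + 1) ≤ Mn σ n := hLMn
      have h2 : Mn σ n < L * M' n := hMnL
      have := lt_of_le_of_lt h1 h2
      exact le_of_lt (lt_of_mul_lt_mul_left this (by omega))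
    -- pick the letter realizing M' n
    obtain ⟨c, hcA', hceq⟩ := Finset.exists_mem_eq_sup A'fs hA'ne
      (fun c : A => (iterW σ n [c]).length)
    have hcA'' : c ∈ A' := by
      rw [hA'fs, Finset.mem_filter] at hcA'
      exact hcA'.2
    have hPc : P c := hocc c hcA''
    set p := Classical.choose hPc with hpdef
    obtain ⟨hij, hui, huj⟩ := Classical.choose_spec hPc
    set i := p.1
    set j := p.2
    have hjJ : j ≤ J := by
      rw [hJdef]
      have : (if h : P c then (Classical.choose h).2 else 0) = j := by
        rw [dif_pos hPc]
      rw [← this]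
      exact Finset.le_sup (f := fun c : A => if h : P c then (Classical.choose h).2 else 0)
        (Finset.mem_univ c)
    -- word decomposition
    set X : List A := pref u i with hX
    set mid : List A := (List.range' i (j - i)).map u with hmid
    have hprefj : pref u j = X ++ mid := by
      rw [hX, hmid, pref, pref, ← List.map_append]
      congr 1
      rw [List.range_eq_range', List.range_eq_range']
      have h0 := List.range'_append (s := 0) (m := i) (n := j - i) (step := 1)
      simp only [Nat.zero_add, Nat.mul_one, Nat.one_mul] at h0
      have hj0 : i + (j - i) = j := by omega
      rw [hj0] at h0
      exact h0.symm
    have hmidc : mid = [c] ++ (List.range' (i+1) (j - i - 1)).map u := by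
      rw [hmid]
      have h1 : j - i = (j - i - 1) + 1 := by omega
      rw [h1, List.range'_succ]
      simp [hui]
    set U : List A := iterW σ n X with hU
    set V : List A := iterW σ n mid with hV
    set k : ℕ := (iterW σ n [c]).length with hk
    have hkM' : k = M' n := hceq.symm
    have hVdec : V = iterW σ n [c] ++ iterW σ n ((List.range' (i+1) (j - i - 1)).map u) := by
      rw [hV, hmidc, iterW_append]
    have hkV : k ≤ V.length := by
      rw [hVdec, List.length_append, hk]; omega
    have hk1 : 1 ≤ k := by
      rw [hkM']; omega
    have htake : V.take k = iterW σ n [c] := by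
      rw [hVdec, hk, List.take_left]
    -- prefix property
    have hUV : U ++ V = iterW σ n (pref u j) := by
      rw [hprefj, iterW_append]
    have hfull : (U ++ V) ++ iterW σ n [c] = iterW σ n (pref u (j + 1)) := by
      rw [pref_succ, iterW_append, hUV, huj]
    have hprefix : IsPrefOf ((U ++ V) ++ iterW σ n [c]) u := by
      rw [hfull]
      exact hfix n _ (isPrefOf_pref u (j + 1))
    -- lengths
    have hlenUV : (U ++ V).length ≤ J * (L * M' n) := by
      have h1 : (U ++ V).length ≤ (pref u j).length * Mn σ n := by
        rw [hUV]
        exact length_iterW_le σ n (Mn σ n) (hMn_le n) _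
      rw [length_pref] at h1
      calc (U ++ V).length ≤ j * Mn σ n := h1
      _ ≤ J * Mn σ n := Nat.mul_le_mul_right _ hjJ
      _ ≤ J * (L * M' n) := Nat.mul_le_mul_left _ (le_of_lt hMnL)
    -- now map by φ
    refine ⟨U.map φ, V.map φ, 1 + (k : ℝ) / (V.map φ).length, ?_, ?_, ?_, ?_, ?_⟩
    · -- V.map φ ≠ []
      intro h
      have := congrArg List.length h
      simp only [List.length_map, List.length_nil] at this
      omega
    · -- 1 ≤ α
      have : (0:ℝ) ≤ (k : ℝ) / (V.map φ).length := by positivity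
      linarith
    · -- prefix property
      have heq : fracPow (V.map φ) (1 + (k : ℝ) / (V.map φ).length)
          = V.map φ ++ (V.map φ).take k := by
        apply fracPow_eq _ k hk1
        rw [List.length_map]; exact hkV
      rw [heq]
      have h2 : U.map φ ++ (V.map φ ++ (V.map φ).take k)
          = (((U ++ V) ++ iterW σ n [c]).map φ) := by
        rw [← List.map_take, htake]
        simp [List.map_append]
      rw [h2]
      exact isPrefOf_map u φ hprefix
    · -- length ≥ N
      have heq : fracPow (V.map φ) (1 + (k : ℝ) / (V.map φ).length)
          = V.map φ ++ (V.map φ).take k := by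
        apply fracPow_eq _ k hk1
        rw [List.length_map]; exact hkV
      rw [heq]
      have h3 : ((V.map φ).take k).length = k := by
        rw [List.length_take, List.length_map]
        omega
      simp only [List.length_append, h3]
      have : N + 1 ≤ k := by rw [hkM']; exact hM'N
      omega
    · -- the exponent inequality
      have heq : fracPow (V.map φ) (1 + (k : ℝ) / (V.map φ).length)
          = V.map φ ++ (V.map φ).take k := by
        apply fracPow_eq _ k hk1
        rw [List.length_map]; exact hkV
      rw [heq]
      have h3 : ((V.map φ).take k).length = k := by
        rw [List.length_take, List.length_map]
        omega
      simp only [List.length_append, List.length_map, h3]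
      push_cast
      have hDpos : (0:ℝ) < (U.length : ℝ) + (V.length : ℝ) := by
        have h4 : 1 ≤ V.length := le_trans hk1 hkV
        have h5 : (1:ℝ) ≤ (V.length : ℝ) := by exact_mod_cast h4
        have h6 : (0:ℝ) ≤ (U.length : ℝ) := Nat.cast_nonneg _
        linarith
      rw [le_div_iff₀ hDpos]
      have h7 : (U.length : ℝ) + (V.length : ℝ) ≤ ((J : ℝ) * (L : ℝ) + 1) * (k : ℝ) := by
        have h6 : (U.length + V.length : ℕ) ≤ J * (L * M' n) := by
          rw [← List.length_append]; exact hlenUV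
        have h6' : ((U.length : ℝ)) + (V.length : ℝ) ≤ ((J * (L * M' n) : ℕ) : ℝ) := by
          exact_mod_cast h6
        have h8 : (M' n : ℝ) = (k : ℝ) := by exact_mod_cast hkM'.symm
        push_cast at h6'
        rw [h8] at h6'
        have hk0 : (0:ℝ) ≤ (k : ℝ) := Nat.cast_nonneg _
        have hJ0 : (0:ℝ) ≤ (J : ℝ) := Nat.cast_nonneg _
        have hL0 : (0:ℝ) ≤ (L : ℝ) := Nat.cast_nonneg _
        nlinarith
      rw [hρdef]
      set S : ℝ := (U.length : ℝ) + (V.length : ℝ) with hS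
      set Pc : ℝ := (J : ℝ) * (L : ℝ) + 1 with hPc2
      have h1P : (0:ℝ) < Pc := by rw [hPc2]; positivity
      have e1 : (1 + 1/Pc) * S = S + (1/Pc) * S := by ring
      have e2 : (1/Pc) * S ≤ (1/Pc) * (Pc * (k:ℝ)) := by
        apply mul_le_mul_of_nonneg_left h7 (by positivity)
      have e3 : (1/Pc) * (Pc * (k:ℝ)) = (k:ℝ) := by field_simp
      linarith
  -- conclude
  have hle : ((ρ : ℝ) : EReal) ≤ dio (fun i => φ (u i)) := by
    apply le_sSup
    exact ⟨ρ, hmem, rfl⟩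
  calc (1 : EReal) < ((ρ : ℝ) : EReal) := by
        rw [show (1 : EReal) = ((1:ℝ) : EReal) from rfl]
        exact_mod_cast hρ1
  _ ≤ dio (fun i => φ (u i)) := hle
end

section
/- Let a = a₁a₂… be an aperiodic infinite word that is a fixed point of a morphism σ over a finite alphabet A, prolongable on its first letter, and let M = max{|σ(i)| : i ∈ A}. Then the Diophantine exponent of a satisfies dio(a) ≤ M + 1. -/
section AuxForStmt11

variable {A : Type*}

lemma isPrefOf_iff {w : List A} {u : ℕ → A} :
    IsPrefOf w u ↔ ∀ j (h : j < w.length), w[j] = u j := by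
  constructor
  · intro h j hj
    have := h ⟨j, hj⟩
    simpa [List.get_eq_getElem] using this
  · intro h i
    simpa [List.get_eq_getElem] using h i.1 i.2

lemma IsPrefOf.mono {w v : List A} {u : ℕ → A} (hv : IsPrefOf v u) (h : w <+: v) :
    IsPrefOf w u := by
  rw [isPrefOf_iff] at *
  intro j hj
  obtain ⟨R, rfl⟩ := h
  rw [← hv j (by simp only [List.length_append]; omega), List.getElem_append_left hj]

lemma pref_compare {w v : List A} {u : ℕ → A} (hw : IsPrefOf w u) (hv : IsPrefOf v u)
    (h : w.length ≤ v.length) : w <+: v := by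
  have : w = v.take w.length := by
    apply List.ext_getElem (by simp [h])
    intro j h1 h2
    have hj : j < v.length := by
      simp only [List.length_take, lt_min_iff] at h2
      omega
    rw [List.getElem_take, isPrefOf_iff.1 hw j h1, isPrefOf_iff.1 hv j hj]
  rw [this]
  exact List.take_prefix _ _

lemma mapW_append (σ : A → List A) (a b : List A) :
    mapW σ (a ++ b) = mapW σ a ++ mapW σ b := List.flatMap_append

lemma mapW_prefix (σ : A → List A) {a b : List A} (h : a <+: b) :
    mapW σ a <+: mapW σ b := by
  obtain ⟨R, rfl⟩ := h
  exact ⟨mapW σ R, (mapW_append σ a R).symm⟩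

lemma mapW_length_le (σ : A → List A) (M : ℕ) (hM : ∀ c, (σ c).length ≤ M) (w : List A) :
    (mapW σ w).length ≤ M * w.length := by
  induction w with
  | nil => simp [mapW]
  | cons c w ih =>
    have : mapW σ (c :: w) = σ c ++ mapW σ w := rfl
    rw [this]
    simp only [List.length_append, List.length_cons]
    have := hM c
    calc (σ c).length + (mapW σ w).length ≤ M + M * w.length := by omega
      _ = M * (w.length + 1) := by ring

variable {σ : A → List A} {u : ℕ → A}

lemma sigma_pref (hpro : Prolongable σ (u 0)) (hfix : ∀ n, IsPrefOf (iterW σ n [u 0]) u)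
    {w : List A} (hw : IsPrefOf w u) : IsPrefOf (mapW σ w) u := by
  obtain ⟨n, hn⟩ := (hpro.2.eventually_ge_atTop w.length).exists
  have h1 : w <+: iterW σ n [u 0] := pref_compare hw (hfix n) hn
  have h2 : mapW σ w <+: iterW σ (n + 1) [u 0] := by
    have h3 := mapW_prefix σ h1
    have h4 : mapW σ (iterW σ n [u 0]) = iterW σ (n + 1) [u 0] :=
      (Function.iterate_succ_apply' (mapW σ) n [u 0]).symm
    rwa [h4] at h3
  exact (hfix (n + 1)).mono h2

lemma sigma_expand (hpro : Prolongable σ (u 0)) (hfix : ∀ n, IsPrefOf (iterW σ n [u 0]) u)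
    {w : List A} (hw : IsPrefOf w u) (hne : w ≠ []) :
    w.length + 1 ≤ (mapW σ w).length := by
  by_contra hcon
  push_neg at hcon
  have hle : (mapW σ w).length ≤ w.length := by omega
  have h1 : mapW σ w <+: w := pref_compare (sigma_pref hpro hfix hw) hw hle
  have hpre : ∀ k, (mapW σ)^[k] w <+: w := by
    intro k
    induction k with
    | zero => simp
    | succ k ih =>
      rw [Function.iterate_succ_apply']
      exact (mapW_prefix σ ih).trans h1
  have hu0 : [u 0] <+: w := by
    obtain ⟨c, w', rfl⟩ : ∃ c w', w = c :: w' := by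
      cases w with
      | nil => exact absurd rfl hne
      | cons c w' => exact ⟨c, w', rfl⟩
    have hc : c = u 0 := by
      have := isPrefOf_iff.1 hw 0 (by simp)
      simpa using this
    exact ⟨w', by rw [hc]; rfl⟩
  have hk : ∀ k, (iterW σ k [u 0]).length ≤ w.length := by
    intro k
    have hik : iterW σ k [u 0] <+: (mapW σ)^[k] w := by
      induction k with
      | zero => exact hu0
      | succ k ih =>
        have := mapW_prefix σ ih
        rw [Function.iterate_succ_apply' (mapW σ) k]
        have h4 : mapW σ (iterW σ k [u 0]) = iterW σ (k + 1) [u 0] :=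
          (Function.iterate_succ_apply' (mapW σ) k [u 0]).symm
        rwa [h4] at this
    exact (hik.trans (hpre k)).length_le
  obtain ⟨k, hk'⟩ := (hpro.2.eventually_ge_atTop (w.length + 1)).exists
  have := hk k
  omega

/-- `u` has period `p` on positions `[m, L)`. -/
def PerOn (u : ℕ → A) (m p L : ℕ) : Prop :=
  ∀ i, m ≤ i → i + p < L → u (i + p) = u i

lemma shape_per {X Y T : List A} (hpref : IsPrefOf (X ++ (Y ++ T)) u)
    (hT : T <+: Y ++ T) :
    PerOn u X.length Y.length (X.length + (Y.length + T.length)) := by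
  obtain ⟨R, hR⟩ := hT
  intro i hx hlt
  have hlenW : (X ++ (Y ++ T)).length = X.length + (Y.length + T.length) := by simp
  have hiy : i + Y.length < (X ++ (Y ++ T)).length := by omega
  have hi : i < (X ++ (Y ++ T)).length := by omega
  have e1 : u (i + Y.length) = T[i - X.length]'(by omega) := by
    rw [← isPrefOf_iff.1 hpref _ hiy]
    rw [List.getElem_append_right (by omega : X.length ≤ i + Y.length)]
    rw [List.getElem_append_right (by omega : Y.length ≤ i + Y.length - X.length)]
    congr 1
    omega
  have e2 : u i = T[i - X.length]'(by omega) := by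
    rw [← isPrefOf_iff.1 hpref _ hi]
    rw [List.getElem_append_right (by omega : X.length ≤ i)]
    have hR' : Y ++ T = T ++ R := hR.symm
    have hlt2 : i - X.length < T.length := by omega
    rw [List.getElem_of_eq hR' _]
    rw [List.getElem_append_left hlt2]
  rw [e1, e2]

/-- The length-`n` prefix of `u`. -/
def preW (u : ℕ → A) (n : ℕ) : List A := List.ofFn (fun i : Fin n => u i)

/-- The segment of `u` of length `n` starting at position `a`. -/
def segW (u : ℕ → A) (a n : ℕ) : List A := List.ofFn (fun i : Fin n => u (a + i))

@[simp] lemma preW_length (u : ℕ → A) (n : ℕ) : (preW u n).length = n := by simp [preW]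
@[simp] lemma segW_length (u : ℕ → A) (a n : ℕ) : (segW u a n).length = n := by simp [segW]

lemma preW_getElem (u : ℕ → A) (n j : ℕ) (h : j < (preW u n).length) :
    (preW u n)[j] = u j := by
  simp [preW] at h ⊢

lemma segW_getElem (u : ℕ → A) (a n j : ℕ) (h : j < (segW u a n).length) :
    (segW u a n)[j] = u (a + j) := by
  simp [segW] at h ⊢

lemma preW_isPref (u : ℕ → A) (n : ℕ) : IsPrefOf (preW u n) u := by
  rw [isPrefOf_iff]
  intro j hj
  exact preW_getElem u n j hj

lemma preW_split (u : ℕ → A) (m q : ℕ) :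
    preW u (m + q) = preW u m ++ segW u m q := by
  apply List.ext_getElem (by simp)
  intro j h1 h2
  by_cases hc : j < m
  · rw [List.getElem_append_left (by simpa using hc), preW_getElem, preW_getElem]
  · rw [List.getElem_append_right (by simp; omega), preW_getElem, segW_getElem]
    congr 1
    simp
    omega

lemma segW_split (u : ℕ → A) (a b c : ℕ) :
    segW u a (b + c) = segW u a b ++ segW u (a + b) c := by
  apply List.ext_getElem (by simp)
  intro j h1 h2
  by_cases hc : j < b
  · rw [List.getElem_append_left (by simpa using hc), segW_getElem, segW_getElem]
  · rw [List.getElem_append_right (by simp; omega), segW_getElem, segW_getElem]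
    congr 1
    simp
    omega

lemma per_shape_T {m p L : ℕ} (per : PerOn u m p L) (h : m + p ≤ L) :
    segW u (m + p) (L - m - p) <+: segW u m p ++ segW u (m + p) (L - m - p) := by
  have key : segW u (m + p) (L - m - p) = (segW u m (p + (L - m - p))).take (L - m - p) := by
    apply List.ext_getElem (by simp)
    intro j h1 h2
    rw [List.getElem_take, segW_getElem, segW_getElem]
    · have hj : j < L - m - p := by simpa using h1
      have := per (m + j) (by omega) (by omega)
      calc u (m + p + j) = u (m + j + p) := by ring_nf
        _ = u (m + j) := this
  have h2 : segW u m p ++ segW u (m + p) (L - m - p) = segW u m (p + (L - m - p)) :=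
    (segW_split u m p (L - m - p)).symm
  rw [h2, key]
  exact List.take_prefix _ _

lemma per_merge {m p m' p' L L' : ℕ} (hp : 0 < p) (hp' : 0 < p') (hmm' : m ≤ m')
    (per1 : PerOn u m p L) (per2 : PerOn u m' p' L')
    (h1 : m' + p' + p ≤ L) (h2 : L ≤ L') : PerOn u m p L' := by
  intro i
  induction i using Nat.strong_induction_on with
  | _ i IH =>
    intro hmi hiL'
    by_cases hcase : i + p < L
    · exact per1 i hmi hcase
    · have hi : m' + p' ≤ i := by omega
      have e1 : u i = u (i - p') := by
        have := per2 (i - p') (by omega) (by omega)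
        rwa [Nat.sub_add_cancel (by omega)] at this
      have e2 : u (i + p) = u (i - p' + p) := by
        have := per2 (i - p' + p) (by omega) (by omega)
        rwa [show i - p' + p + p' = i + p by omega] at this
      have e3 : u (i - p' + p) = u (i - p') := IH (i - p') (by omega) (by omega) (by omega)
      rw [e1, e2, e3]

lemma mem_of_prefix_append {Y T : List A} (hY : Y ≠ []) (h : T <+: Y ++ T) :
    ∀ a ∈ T, a ∈ Y := by
  obtain ⟨R, hR⟩ := h
  have hYpos : 0 < Y.length := List.length_pos_iff.2 hY
  have key : ∀ j, ∀ hj : j < T.length, T[j] ∈ Y := by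
    intro j
    induction j using Nat.strong_induction_on with
    | _ j IH =>
      intro hj
      have hj2 : j < (Y ++ T).length := by simp; omega
      have heq : T[j] = (Y ++ T)[j] := by
        rw [List.getElem_of_eq hR.symm hj2, List.getElem_append_left hj]
      by_cases hc : j < Y.length
      · rw [heq, List.getElem_append_left hc]
        exact List.getElem_mem _
      · rw [heq, List.getElem_append_right (by omega)]
        exact IH (j - Y.length) (by omega) (by omega)
  intro a ha
  obtain ⟨j, hj, rfl⟩ := List.mem_iff_getElem.1 ha
  exact key j hj

lemma per_step (hpro : Prolongable σ (u 0)) (hfix : ∀ n, IsPrefOf (iterW σ n [u 0]) u)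
    {M : ℕ} (hMc : ∀ c, (σ c).length ≤ M) {m p L : ℕ} (hp : 0 < p)
    (hL : (M + 1) * (m + p) ≤ L) (per : PerOn u m p L) :
    ∃ L', L + 1 ≤ L' ∧ PerOn u m p L' := by
  have hexp : (M + 1) * (m + p) = M * m + M * p + m + p := by ring
  have hmpL : m + p ≤ L := by omega
  set X := preW u m with hX
  set Y := segW u m p with hY
  set T := segW u (m + p) (L - m - p) with hTdef
  have hXlen : X.length = m := by rw [hX]; simp
  have hYlen : Y.length = p := by rw [hY]; simp
  have hsplit : preW u L = X ++ (Y ++ T) := by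
    have h2 : segW u m (L - m) = segW u m p ++ segW u (m + p) (L - m - p) := by
      have h3 := segW_split u m p (L - m - p)
      rwa [show p + (L - m - p) = L - m by omega] at h3
    rw [hX, hY, hTdef]
    conv_lhs => rw [show L = m + (L - m) by omega]
    rw [preW_split, h2]
  have hT : T <+: Y ++ T := per_shape_T per hmpL
  have hWpref : IsPrefOf (preW u L) u := preW_isPref u L
  have hW' : IsPrefOf (mapW σ (preW u L)) u := sigma_pref hpro hfix hWpref
  have hmap : mapW σ (preW u L) = mapW σ X ++ (mapW σ Y ++ mapW σ T) := by
    rw [hsplit, mapW_append, mapW_append]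
  have hLpos : 0 < L := by omega
  have hLexp : L + 1 ≤ (mapW σ (preW u L)).length := by
    have hne : preW u L ≠ [] := by
      intro hnil
      have := congrArg List.length hnil
      simp at this
      omega
    have := sigma_expand hpro hfix hWpref hne
    simpa using this
  have hT'pre : mapW σ T <+: mapW σ Y ++ mapW σ T := by
    obtain ⟨R, hR⟩ := hT
    exact ⟨mapW σ R, by rw [← mapW_append, ← mapW_append, hR]⟩
  have per2 : PerOn u (mapW σ X).length (mapW σ Y).length
      ((mapW σ X).length + ((mapW σ Y).length + (mapW σ T).length)) := by
    apply shape_per _ hT'pre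
    rwa [← hmap]
  have hlen' : (mapW σ X).length + ((mapW σ Y).length + (mapW σ T).length)
      = (mapW σ (preW u L)).length := by
    rw [hmap]
    simp
  rw [hlen'] at per2
  have hm'le : (mapW σ X).length ≤ M * m := by
    have := mapW_length_le σ M hMc X
    rwa [hXlen] at this
  have hp'le : (mapW σ Y).length ≤ M * p := by
    have := mapW_length_le σ M hMc Y
    rwa [hYlen] at this
  have hmm' : m ≤ (mapW σ X).length := by
    rcases Nat.eq_zero_or_pos m with h0 | h0
    · omega
    · have hXne : X ≠ [] := by
        intro hnil
        have := congrArg List.length hnil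
        rw [hXlen] at this
        simp at this
        omega
      have hXpref : IsPrefOf X u := by rw [hX]; exact preW_isPref u m
      have := sigma_expand hpro hfix hXpref hXne
      rw [hXlen] at this
      omega
  have hp'pos : 0 < (mapW σ Y).length := by
    by_contra hc
    push_neg at hc
    have hY' : mapW σ Y = [] := List.length_eq_zero_iff.1 (by omega)
    have hYnil : ∀ a ∈ Y, σ a = [] := List.flatMap_eq_nil_iff.1 hY'
    have hYne : Y ≠ [] := by
      intro hnil
      have := congrArg List.length hnil
      rw [hYlen] at this
      simp at this
      omega
    have hT' : mapW σ T = [] :=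
      List.flatMap_eq_nil_iff.2 (fun a ha => hYnil a (mem_of_prefix_append hYne hT a ha))
    have hTlen : (mapW σ T).length = 0 := by rw [hT']; rfl
    omega
  exact ⟨(mapW σ (preW u L)).length, hLexp,
    per_merge hp hp'pos hmm' per per2 (by omega) (by omega)⟩

lemma per_forever (hpro : Prolongable σ (u 0)) (hfix : ∀ n, IsPrefOf (iterW σ n [u 0]) u)
    {M : ℕ} (hMc : ∀ c, (σ c).length ≤ M) {m p L : ℕ} (hp : 0 < p)
    (hL : (M + 1) * (m + p) ≤ L) (per : PerOn u m p L) :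
    ∀ i, m ≤ i → u (i + p) = u i := by
  have key : ∀ k, ∃ L', L + k ≤ L' ∧ PerOn u m p L' := by
    intro k
    induction k with
    | zero => exact ⟨L, by omega, per⟩
    | succ k ih =>
      obtain ⟨L1, h1, h2⟩ := ih
      obtain ⟨L2, h3, h4⟩ := per_step hpro hfix hMc hp (by omega) h2
      exact ⟨L2, by omega, h4⟩
  intro i hi
  obtain ⟨L', h1, h2⟩ := key (i + p + 1)
  exact h2 i hi (by omega)

lemma flatten_replicate_comm (V : List A) (k : ℕ) :
    V ++ (List.replicate k V).flatten = (List.replicate k V).flatten ++ V := by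
  induction k with
  | zero => simp
  | succ k ih =>
    rw [List.replicate_succ, List.flatten_cons, List.append_assoc, ← ih]

lemma fracPow_shape (V : List A) {α : ℝ} (hα : 1 ≤ α) :
    ∃ T : List A, fracPow V α = V ++ T ∧ T <+: V ++ T := by
  have ht : 1 ≤ ⌊α⌋₊ := Nat.le_floor (by exact_mod_cast hα)
  obtain ⟨k, hk⟩ : ∃ k, ⌊α⌋₊ = k + 1 := ⟨⌊α⌋₊ - 1, by omega⟩
  set r := ⌈Int.fract α * V.length⌉₊ with hr
  refine ⟨(List.replicate k V).flatten ++ V.take r, ?_, ?_⟩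
  · rw [fracPow, hk, List.replicate_succ, List.flatten_cons, List.append_assoc]
  · refine ⟨V.drop r ++ V.take r, ?_⟩
    have h2 : V.take r ++ (V.drop r ++ V.take r) = V ++ V.take r := by
      rw [← List.append_assoc, List.take_append_drop]
    rw [List.append_assoc, h2, ← List.append_assoc, ← flatten_replicate_comm,
      List.append_assoc]

end AuxForStmt11
/-- an aperiodic purely morphic word generated by a morphism `σ`
has Diophantine exponent at most `M + 1`, where `M = max |σ(i)|`. -/
theorem stmt_11 {A : Type*} [Fintype A] (σ : A → List A)
    (u : ℕ → A) (hpro : Prolongable σ (u 0))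
    (hfix : ∀ n : ℕ, IsPrefOf (iterW σ n [u 0]) u)
    (haper : ¬ ∃ m p : ℕ, 1 ≤ p ∧ ∀ i : ℕ, m ≤ i → u (i + p) = u i)
    (M : ℕ) (hM : M = Finset.univ.sup fun c : A => (σ c).length) :
    dio u ≤ (((M : ℝ) + 1 : ℝ) : EReal) := by
  have hMc : ∀ c : A, (σ c).length ≤ M := fun c => hM ▸ Finset.le_sup (f := fun c : A => (σ c).length) (Finset.mem_univ c)
  rw [dio]
  apply sSup_le
  rintro x ⟨ρ, hρ, rfl⟩
  rw [EReal.coe_le_coe_iff]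
  by_contra hcon
  push_neg at hcon
  obtain ⟨U, V, α, hV, hα, hpref, -, hle⟩ := hρ 0
  set m := U.length with hm
  set p := V.length with hpdef
  set L := (U ++ fracPow V α).length with hLdef
  have hp : 0 < p := List.length_pos_iff.2 hV
  have hL : (M + 1) * (m + p) ≤ L := by
    have hmp : (0 : ℝ) < (m : ℝ) + (p : ℝ) := by
      have : (0 : ℝ) < (p : ℝ) := by exact_mod_cast hp
      have : (0 : ℝ) ≤ (m : ℝ) := Nat.cast_nonneg m
      linarith
    have h1 : ρ * ((m : ℝ) + p) ≤ (L : ℝ) := (le_div_iff₀ hmp).1 hle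
    have h2 : ((M : ℝ) + 1) * ((m : ℝ) + p) < (L : ℝ) := by nlinarith
    have h3 : (((M + 1) * (m + p) : ℕ) : ℝ) < (L : ℝ) := by push_cast; linarith
    exact_mod_cast h3.le
  obtain ⟨T, hfp, hTpre⟩ := fracPow_shape V hα
  have per : PerOn u m p L := by
    have hpref' : IsPrefOf (U ++ (V ++ T)) u := by
      rwa [hfp] at hpref
    have := shape_per hpref' hTpre
    have hlen : m + (p + T.length) = L := by
      rw [hLdef, hfp]
      simp
      rfl
    rwa [hlen] at this
  exact haper ⟨m, p, hp, per_forever hpro hfix hMc hp hL per⟩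
end
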